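/- Let ℏ > 0 and σ, γ, η ∈ ℝ. Suppose a, P, Q, c, D, φ : I → ℝ are differentiable real-valued functions on an open interval I with a(t) > 0 for all t ∈ I, satisfying the ODE system a'(t) = 2σ² − (γ²η²/2)a(t)², P'(t) = −(γ²η²/2)a(t)P(t), Q'(t) = −(2σ²/a(t))Q(t) − η, c'(t) = −(σ²/a(t))c(t), D'(t) = (σ²/2)Q(t)² + (γ²η²/2)P(t)², and φ'(t) = Q'(t)P(t) + ηP(t). Then the complex-valued function w(t,p) = c(t)·exp((−D(t) + i·φ(t))/ℏ)·exp(−i·Q(t)·p/ℏ)·exp(−(p − P(t))²/(ℏ·a(t))) satisfies, for all t ∈ I and p ∈ ℝ, the partial differential equation ℏ·∂ₜw(t,p) = (ℏ²σ²/2)·∂ₚ²w(t,p) − (γ²η²/2)·p²·w(t,p) + i·η·p·w(t,p). -/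

import Mathlib

open Complex

private lemma hid' (x : ℝ) : HasDerivAt (fun p' : ℝ => (p' : ℂ)) 1 x := by
  simpa using (hasDerivAt_id x).ofReal_comp

private lemma spatial1 (K α β μ : ℂ) (x : ℝ) :
    HasDerivAt (fun p' : ℝ => K * Complex.exp (α * p') * Complex.exp (β * ((p' : ℂ) - μ) ^ 2))
      (K * Complex.exp (α * x) * Complex.exp (β * ((x : ℂ) - μ) ^ 2)
        * (α + β * (2 * ((x : ℂ) - μ)))) x := by
  have h1 : HasDerivAt (fun p' : ℝ => Complex.exp (α * p')) (Complex.exp (α * x) * α) x := by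
    simpa using (((hid' x).const_mul α).cexp)
  have h2 : HasDerivAt (fun p' : ℝ => Complex.exp (β * ((p' : ℂ) - μ) ^ 2))
      (Complex.exp (β * ((x : ℂ) - μ) ^ 2) * (β * (2 * ((x : ℂ) - μ)))) x := by
    have hz := (hid' x).sub_const μ
    have hsq : HasDerivAt (fun p' : ℝ => ((p' : ℂ) - μ) ^ 2) (2 * ((x : ℂ) - μ)) x := by
      have := hz.fun_mul hz
      have e : (fun p' : ℝ => ((p' : ℂ) - μ) * ((p' : ℂ) - μ)) =
          fun p' : ℝ => ((p' : ℂ) - μ) ^ 2 := by funext p'; ring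
      rw [e] at this
      exact this.congr_deriv (by ring)
    exact (hsq.const_mul β).cexp
  have := (h1.const_mul K).fun_mul h2
  exact this.congr_deriv (by ring)

private lemma spatial2 (K α β μ : ℂ) (x : ℝ) :
    HasDerivAt (fun p' : ℝ => K * Complex.exp (α * p') * Complex.exp (β * ((p' : ℂ) - μ) ^ 2)
        * (α + β * (2 * ((p' : ℂ) - μ))))
      (K * Complex.exp (α * x) * Complex.exp (β * ((x : ℂ) - μ) ^ 2)
        * ((α + β * (2 * ((x : ℂ) - μ))) ^ 2 + 2 * β)) x := by
  have h1 := spatial1 K α β μ x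
  have h2 : HasDerivAt (fun p' : ℝ => α + β * (2 * ((p' : ℂ) - μ))) (β * 2) x := by
    have := (((hid' x).sub_const μ).const_mul (β * 2)).const_add α
    have e : (fun p' : ℝ => α + β * 2 * ((p' : ℂ) - μ)) =
        fun p' : ℝ => α + β * (2 * ((p' : ℂ) - μ)) := by funext p'; ring
    simpa [e, mul_assoc] using this
  have := h1.fun_mul h2
  exact this.congr_deriv (by ring)

private lemma spatial_second (K α β μ : ℂ) (p : ℝ) :
    iteratedDeriv 2 (fun p' : ℝ => K * Complex.exp (α * p') * Complex.exp (β * ((p' : ℂ) - μ) ^ 2)) p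
      = K * Complex.exp (α * p) * Complex.exp (β * ((p : ℂ) - μ) ^ 2)
        * ((α + β * (2 * ((p : ℂ) - μ))) ^ 2 + 2 * β) := by
  rw [iteratedDeriv_succ, iteratedDeriv_one]
  have hd : deriv (fun p' : ℝ => K * Complex.exp (α * p') * Complex.exp (β * ((p' : ℂ) - μ) ^ 2))
      = fun x : ℝ => K * Complex.exp (α * x) * Complex.exp (β * ((x : ℂ) - μ) ^ 2)
        * (α + β * (2 * ((x : ℂ) - μ))) := by
    funext x; exact (spatial1 K α β μ x).deriv
  rw [hd]
  exact (spatial2 K α β μ p).deriv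

set_option maxHeartbeats 4000000 in
theorem stmt0 (hbar σ γ η : ℝ) (hhbar : 0 < hbar)
    (S : Set ℝ) (hS : IsOpen S)
    (a P Q c D φ : ℝ → ℝ)
    (ha_pos : ∀ t ∈ S, 0 < a t)
    (ha : ∀ t ∈ S, HasDerivAt a (2 * σ ^ 2 - γ ^ 2 * η ^ 2 / 2 * (a t) ^ 2) t)
    (hP : ∀ t ∈ S, HasDerivAt P (-(γ ^ 2 * η ^ 2 / 2) * a t * P t) t)
    (hQ : ∀ t ∈ S, HasDerivAt Q (-(2 * σ ^ 2 / a t) * Q t - η) t)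
    (hc : ∀ t ∈ S, HasDerivAt c (-(σ ^ 2 / a t) * c t) t)
    (hD : ∀ t ∈ S, HasDerivAt D (σ ^ 2 / 2 * (Q t) ^ 2 + γ ^ 2 * η ^ 2 / 2 * (P t) ^ 2) t)
    (hφ : ∀ t ∈ S, HasDerivAt φ (deriv Q t * P t + η * P t) t)
    (w : ℝ → ℝ → ℂ)
    (hw : ∀ t p, w t p =
      (c t : ℂ) * Complex.exp ((-(D t : ℂ) + Complex.I * (φ t : ℂ)) / (hbar : ℂ)) *
        Complex.exp (-Complex.I * (Q t : ℂ) * (p : ℂ) / (hbar : ℂ)) *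
        Complex.exp (-((p : ℂ) - (P t : ℂ)) ^ 2 / ((hbar : ℂ) * (a t : ℂ)))) :
    ∀ t ∈ S, ∀ p : ℝ,
      (hbar : ℂ) * deriv (fun s => w s p) t =
        ((hbar ^ 2 * σ ^ 2 / 2 : ℝ) : ℂ) * iteratedDeriv 2 (fun p' : ℝ => w t p') p
          - ((γ ^ 2 * η ^ 2 / 2 : ℝ) : ℂ) * (p : ℂ) ^ 2 * w t p
          + Complex.I * (η : ℂ) * (p : ℂ) * w t p := by
  intro t ht p
  have hA : a t ≠ 0 := ne_of_gt (ha_pos t ht)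
  have hh : (hbar : ℂ) ≠ 0 := by exact_mod_cast ne_of_gt hhbar
  have hAc : ((a t : ℝ) : ℂ) ≠ 0 := by exact_mod_cast hA
  have hden : (hbar : ℂ) * ((a t : ℝ) : ℂ) ≠ 0 := mul_ne_zero hh hAc
  -- spatial part
  have e1 : ∀ p' : ℝ, -Complex.I * (Q t : ℂ) * (p' : ℂ) / (hbar : ℂ)
      = (-Complex.I * (Q t : ℂ) / (hbar : ℂ)) * (p' : ℂ) := fun _ => by ring
  have e2 : ∀ p' : ℝ, -((p' : ℂ) - (P t : ℂ)) ^ 2 / ((hbar : ℂ) * (a t : ℂ))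
      = (-(1 / ((hbar : ℂ) * (a t : ℂ)))) * ((p' : ℂ) - (P t : ℂ)) ^ 2 := fun _ => by ring
  have hfun : (fun p' : ℝ => w t p') = fun p' : ℝ =>
      ((c t : ℂ) * Complex.exp ((-(D t : ℂ) + Complex.I * (φ t : ℂ)) / (hbar : ℂ)))
        * Complex.exp ((-Complex.I * (Q t : ℂ) / (hbar : ℂ)) * (p' : ℂ))
        * Complex.exp ((-(1 / ((hbar : ℂ) * (a t : ℂ)))) * ((p' : ℂ) - (P t : ℂ)) ^ 2) := by
    funext p'
    rw [hw t p', e1 p', e2 p']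
  have hspat := spatial_second
    ((c t : ℂ) * Complex.exp ((-(D t : ℂ) + Complex.I * (φ t : ℂ)) / (hbar : ℂ)))
    (-Complex.I * (Q t : ℂ) / (hbar : ℂ)) (-(1 / ((hbar : ℂ) * (a t : ℂ)))) ((P t : ℂ)) p
  -- time part
  have hDc := (hD t ht).ofReal_comp
  have hφc := (hφ t ht).ofReal_comp
  have hQc := (hQ t ht).ofReal_comp
  have hPc := (hP t ht).ofReal_comp
  have hac := (ha t ht).ofReal_comp
  have hcc := (hc t ht).ofReal_comp
  have h1 := ((hDc.fun_neg.fun_add (hφc.const_mul Complex.I)).div_const (hbar : ℂ)).cexp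
  have h2 := (((hQc.const_mul (-Complex.I)).mul_const ((p : ℝ) : ℂ)).div_const (hbar : ℂ)).cexp
  have hsub := hPc.const_sub ((p : ℝ) : ℂ)
  have hsq : HasDerivAt (fun s : ℝ => ((p : ℂ) - (P s : ℂ)) ^ 2)
      (2 * ((p : ℂ) - (P t : ℂ)) * (-((-(γ ^ 2 * η ^ 2 / 2) * a t * P t : ℝ) : ℂ))) t := by
    have := hsub.fun_mul hsub
    have e : (fun s : ℝ => ((p : ℂ) - (P s : ℂ)) * ((p : ℂ) - (P s : ℂ)))
        = fun s : ℝ => ((p : ℂ) - (P s : ℂ)) ^ 2 := by funext s; ring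
    rw [e] at this
    exact this.congr_deriv (by ring)
  have h3 := ((hsq.fun_neg).fun_div (hac.const_mul (hbar : ℂ)) hden).cexp
  have H := ((hcc.fun_mul h1).fun_mul h2).fun_mul h3
  have hfun2 : (fun s => w s p) = fun s : ℝ =>
      (c s : ℂ) * Complex.exp ((-(D s : ℂ) + Complex.I * (φ s : ℂ)) / (hbar : ℂ)) *
        Complex.exp (-Complex.I * (Q s : ℂ) * (p : ℂ) / (hbar : ℂ)) *
        Complex.exp (-((p : ℂ) - (P s : ℂ)) ^ 2 / ((hbar : ℂ) * (a s : ℂ))) :=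
    funext fun s => hw s p
  rw [hfun2, H.deriv, hfun, hspat, hw t p]
  rw [show (-Complex.I * (Q t : ℂ) / (hbar : ℂ)) * ((p : ℝ) : ℂ)
      = -Complex.I * (Q t : ℂ) * ((p : ℝ) : ℂ) / (hbar : ℂ) from by ring]
  rw [show (-(1 / ((hbar : ℂ) * (a t : ℂ)))) * (((p : ℝ) : ℂ) - (P t : ℂ)) ^ 2
      = -(((p : ℝ) : ℂ) - (P t : ℂ)) ^ 2 / ((hbar : ℂ) * (a t : ℂ)) from by ring]
  rw [(hQ t ht).deriv]
  have hsqe : ((-Complex.I * (Q t : ℂ) / (hbar : ℂ))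
        + (-(1 / ((hbar : ℂ) * (a t : ℂ)))) * (2 * (((p : ℝ) : ℂ) - (P t : ℂ)))) ^ 2
        + 2 * (-(1 / ((hbar : ℂ) * (a t : ℂ))))
      = -((Q t : ℂ) ^ 2 / (hbar : ℂ) ^ 2)
        + Complex.I * (4 * (Q t : ℂ) * (((p : ℝ) : ℂ) - (P t : ℂ))) / ((hbar : ℂ) ^ 2 * (a t : ℂ))
        + 4 * (((p : ℝ) : ℂ) - (P t : ℂ)) ^ 2 / ((hbar : ℂ) ^ 2 * (a t : ℂ) ^ 2)
        - 2 / ((hbar : ℂ) * (a t : ℂ)) := by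
    linear_combination ((Q t : ℂ) ^ 2 / (hbar : ℂ) ^ 2) * Complex.I_sq
  rw [hsqe]
  generalize Complex.exp ((-(D t : ℂ) + Complex.I * (φ t : ℂ)) / (hbar : ℂ)) = E1
  generalize Complex.exp (-Complex.I * (Q t : ℂ) * ((p : ℝ) : ℂ) / (hbar : ℂ)) = E2
  generalize Complex.exp (-(((p : ℝ) : ℂ) - (P t : ℂ)) ^ 2 / ((hbar : ℂ) * (a t : ℂ))) = E3
  push_cast
  field_simp
  ring_nf
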